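/- In the ring R = ℤ[ξ, ξ']/(ξ^{n+1}, (ξ')^{n+1}, ∑_{i=0}^n (−1)^i ξ^i (ξ')^{n−i}), with n ≥ 2, the monomial ξ^n (ξ')^{n−1} is nonzero; equivalently the degree 2(2n−1) component of R is nonzero. -/
import Mathlib

open MvPolynomial Finset

noncomputable section Aux

/-- exponent vector `x^a y^b` -/
def ee (a b : ℕ) : Fin 2 →₀ ℕ := Finsupp.single 0 a + Finsupp.single 1 b

lemma ee_apply0 (a b : ℕ) : ee a b 0 = a := by simp [ee]
lemma ee_apply1 (a b : ℕ) : ee a b 1 = b := by simp [ee]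

lemma ee_le_ee {a b c d : ℕ} : ee a b ≤ ee c d ↔ a ≤ c ∧ b ≤ d := by
  simp [Finsupp.le_def, Fin.forall_fin_two, ee_apply0, ee_apply1]

lemma ee_sub_ee (a b c d : ℕ) : ee c d - ee a b = ee (c - a) (d - b) := by
  ext x
  fin_cases x <;> simp [Finsupp.tsub_apply, ee_apply0, ee_apply1]

lemma X_pow_mul_X_pow (a b : ℕ) :
    (X 0 : MvPolynomial (Fin 2) ℤ) ^ a * X 1 ^ b = monomial (ee a b) 1 := by
  rw [X_pow_eq_monomial, X_pow_eq_monomial, monomial_mul, ee, mul_one]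

/-- the linear functional -/
def lam (n : ℕ) (p : MvPolynomial (Fin 2) ℤ) : ℤ :=
  coeff (ee n (n - 1)) p + coeff (ee (n - 1) n) p

lemma lam_add (n : ℕ) (p q : MvPolynomial (Fin 2) ℤ) :
    lam n (p + q) = lam n p + lam n q := by
  simp [lam, coeff_add]; ring

lemma lam_mul_g1 (n : ℕ) (hn : 1 ≤ n) (p : MvPolynomial (Fin 2) ℤ) :
    lam n (p * X 0 ^ (n + 1)) = 0 := by
  have h : (X 0 : MvPolynomial (Fin 2) ℤ) ^ (n+1) = monomial (ee (n+1) 0) 1 := by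
    rw [← X_pow_mul_X_pow, pow_zero, mul_one]
  rw [lam, h, coeff_mul_monomial', coeff_mul_monomial'] ; simp only [ee_le_ee]
  rw [if_neg (by omega), if_neg (by omega)]
  norm_num

lemma lam_mul_g2 (n : ℕ) (hn : 1 ≤ n) (p : MvPolynomial (Fin 2) ℤ) :
    lam n (p * X 1 ^ (n + 1)) = 0 := by
  have h : (X 1 : MvPolynomial (Fin 2) ℤ) ^ (n+1) = monomial (ee 0 (n+1)) 1 := by
    rw [← X_pow_mul_X_pow, pow_zero, one_mul]
  rw [lam, h, coeff_mul_monomial', coeff_mul_monomial'] ; simp only [ee_le_ee]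
  rw [if_neg (by omega), if_neg (by omega)]
  norm_num

lemma lam_mul_g3 (n : ℕ) (hn : 1 ≤ n) (p : MvPolynomial (Fin 2) ℤ) :
    lam n (p * ∑ i ∈ range (n + 1),
      (-1 : MvPolynomial (Fin 2) ℤ) ^ i * X 0 ^ i * X 1 ^ (n - i)) = 0 := by
  have hg : ∀ i : ℕ, (-1 : MvPolynomial (Fin 2) ℤ) ^ i * X 0 ^ i * X 1 ^ (n - i)
      = monomial (ee i (n - i)) ((-1 : ℤ) ^ i) := by
    intro i
    rw [mul_assoc, X_pow_mul_X_pow, ← C_1, ← C_neg, ← C_pow, C_mul_monomial, mul_one]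
  simp only [hg]
  rw [lam, Finset.mul_sum, coeff_sum, coeff_sum]
  have h1 : ∀ i ∈ range (n+1),
      coeff (ee n (n-1)) (p * monomial (ee i (n - i)) ((-1:ℤ)^i))
      = if 1 ≤ i then (-1:ℤ)^i * coeff (ee (n-i) (i-1)) p else 0 := by
    intro i hi
    rw [mem_range] at hi
    rw [coeff_mul_monomial']; simp only [ee_le_ee]
    by_cases h : 1 ≤ i
    · rw [if_pos ⟨by omega, by omega⟩, if_pos h, ee_sub_ee]
      rw [show n - 1 - (n - i) = i - 1 by omega]
      ring
    · rw [if_neg (by omega), if_neg h]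
  have h2 : ∀ i ∈ range (n+1),
      coeff (ee (n-1) n) (p * monomial (ee i (n - i)) ((-1:ℤ)^i))
      = if i ≤ n - 1 then (-1:ℤ)^i * coeff (ee (n-1-i) i) p else 0 := by
    intro i hi
    rw [mem_range] at hi
    rw [coeff_mul_monomial']; simp only [ee_le_ee]
    by_cases h : i ≤ n - 1
    · rw [if_pos ⟨h, by omega⟩, if_pos h, ee_sub_ee]
      rw [show n - (n - i) = i by omega]
      ring
    · rw [if_neg (by omega), if_neg h]
  rw [Finset.sum_congr rfl h1, Finset.sum_congr rfl h2]
  rw [Finset.sum_range_succ' (fun i => if 1 ≤ i then (-1:ℤ)^i * coeff (ee (n-i) (i-1)) p else 0)]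
  rw [Finset.sum_range_succ (fun i => if i ≤ n - 1 then (-1:ℤ)^i * coeff (ee (n-1-i) i) p else 0)]
  rw [if_neg (by omega), if_neg (by omega), add_zero, add_zero]
  rw [← Finset.sum_add_distrib]
  apply Finset.sum_eq_zero
  intro i hi
  rw [mem_range] at hi
  rw [if_pos (by omega), if_pos (by omega)]
  simp only [Nat.add_sub_cancel]
  rw [show n - (i+1) = n - 1 - i by omega]
  ring

end Aux

/-- In `R = ℤ[ξ,ξ']/(ξ^{n+1}, (ξ')^{n+1}, ∑_{i=0}^n (−1)^i ξ^i (ξ')^{n−i})` with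
`n ≥ 2`, the top monomial `ξ^n (ξ')^{n-1}` is nonzero. -/
theorem stmt_3 (n : ℕ) (hn : 2 ≤ n) :
    Ideal.Quotient.mk
      (Ideal.span {(X 0 : MvPolynomial (Fin 2) ℤ) ^ (n + 1), (X 1) ^ (n + 1),
        ∑ i ∈ range (n + 1), (-1 : MvPolynomial (Fin 2) ℤ) ^ i * X 0 ^ i * X 1 ^ (n - i)})
      (X 0 ^ n * X 1 ^ (n - 1)) ≠ 0 := by
  intro h
  rw [Ideal.Quotient.eq_zero_iff_mem] at h
  have hn1 : 1 ≤ n := by omega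
  have key : ∀ x ∈ Ideal.span {(X 0 : MvPolynomial (Fin 2) ℤ) ^ (n + 1), (X 1) ^ (n + 1),
        ∑ i ∈ range (n + 1), (-1 : MvPolynomial (Fin 2) ℤ) ^ i * X 0 ^ i * X 1 ^ (n - i)},
      ∀ p : MvPolynomial (Fin 2) ℤ, lam n (p * x) = 0 := by
    intro x hx
    refine Submodule.span_induction ?_ ?_ ?_ ?_ hx
    · rintro g hg p
      simp only [Set.mem_insert_iff, Set.mem_singleton_iff] at hg
      rcases hg with rfl | rfl | rfl
      · exact lam_mul_g1 n hn1 p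
      · exact lam_mul_g2 n hn1 p
      · exact lam_mul_g3 n hn1 p
    · intro p; simp [lam]
    · intro a b _ _ ha hb p
      rw [mul_add, lam_add, ha, hb, add_zero]
    · intro r a _ ha p
      rw [smul_eq_mul, ← mul_assoc, ha]
  have h1 := key _ h 1
  rw [one_mul] at h1
  rw [X_pow_mul_X_pow] at h1
  rw [lam, coeff_monomial, coeff_monomial, if_pos rfl, if_neg ?_] at h1
  · norm_num at h1
  · intro he
    have := congrArg (fun f => f (0 : Fin 2)) he
    simp only [ee_apply0] at this
    omega
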